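/- Let (F,v) be a valued field of characteristic 0 whose residue field has characteristic p > 0 and which contains a primitive p-th root of unity, and let η, a ∈ F. If v(η−a) < vp/(p−1) + vη (an inequality in the divisible hull of vF), then v(η^p − a^p) = p·v(η−a). -/

import Mathlib

/-- Let `(F,v)` be a valued field of characteristic `0` whose residue
field has characteristic `p > 0` (rendered as: `p` prime and `v p < 1`) and which contains
a primitive `p`-th root of unity, and let `η, a ∈ F`.  If `v(η−a) < vp/(p−1) + vη`
(an inequality in the divisible hull of `vF`), then `v(η^p − a^p) = p·v(η−a)`.

Multiplicative notation (order reversed): after clearing denominators, the hypothesis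
reads `v p · (v η)^(p−1) < (v (η−a))^(p−1)`, and the conclusion reads
`v (η^p − a^p) = (v (η−a))^p`. -/
theorem statement14 {F : Type*} [Field F] [CharZero F]
    {Γ : Type*} [LinearOrderedCommGroupWithZero Γ] (v : Valuation F Γ)
    (p : ℕ) (hp : p.Prime) (hres : v ((p : ℕ) : F) < 1)
    (ζ : F) (hζ : IsPrimitiveRoot ζ p)
    (η a : F)
    (h : v ((p : ℕ) : F) * v η ^ (p - 1) < v (η - a) ^ (p - 1)) :
    v (η ^ p - a ^ p) = v (η - a) ^ p := by
  have hfact : Fact p.Prime := ⟨hp⟩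
  have hne : NeZero p := ⟨hp.ne_zero⟩
  have hp0 : 0 < p := hp.pos
  have hpm1 : p - 1 ≠ 0 := Nat.sub_ne_zero_of_lt hp.one_lt
  -- v of any p-th root of unity is 1
  have hone : ∀ μ : F, μ ^ p = 1 → v μ = 1 := by
    intro μ hμ
    have : v μ ^ p = 1 := by rw [← map_pow, hμ, map_one]
    exact le_antisymm ((pow_le_one_iff hp.ne_zero).mp this.le) ((one_le_pow_iff hp.ne_zero).mp this.ge)
  -- key comparison: v (μ - 1) ≤ v (ν - 1) for ν primitive
  have key : ∀ μ : F, μ ^ p = 1 → ∀ ν : F, IsPrimitiveRoot ν p → v (μ - 1) ≤ v (ν - 1) := by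
    intro μ hμ ν hν
    obtain ⟨i, -, rfl⟩ := hν.eq_pow_of_pow_eq_one hμ
    have hgeom : ν ^ i - 1 = (∑ k ∈ Finset.range i, ν ^ k) * (ν - 1) := (geom_sum_mul ν i).symm
    rw [hgeom, v.map_mul]
    have hsum : v (∑ k ∈ Finset.range i, ν ^ k) ≤ 1 := by
      apply v.map_sum_le
      intro k _
      rw [map_pow, hone ν hν.pow_eq_one, one_pow]
    calc v (∑ k ∈ Finset.range i, ν ^ k) * v (ν - 1) ≤ 1 * v (ν - 1) :=
          mul_le_mul_left hsum _
      _ = v (ν - 1) := one_mul _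
  -- product formula : v p = ∏ over primitive roots of v (1 - ν)
  have hprod : v ((p : ℕ) : F) = ∏ ν ∈ primitiveRoots p F, v (1 - ν) := by
    have hcyc := Polynomial.eval_one_cyclotomic_prime (R := F) (p := p)
    rw [Polynomial.cyclotomic_eq_prod_X_sub_primitiveRoots hζ] at hcyc
    simp only [Polynomial.eval_prod, Polynomial.eval_sub, Polynomial.eval_X,
      Polynomial.eval_C] at hcyc
    rw [← hcyc, map_prod]
  have hcardprim : (primitiveRoots p F).card = p - 1 := by
    rw [hζ.card_primitiveRoots, Nat.totient_prime hp]
  -- bound: for μ a p-th root of unity, v(μ-1)^(p-1) ≤ v p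
  have hle : ∀ μ : F, μ ^ p = 1 → v (μ - 1) ^ (p - 1) ≤ v ((p : ℕ) : F) := by
    intro μ hμ
    rw [hprod]
    calc v (μ - 1) ^ (p - 1) = ∏ _ν ∈ primitiveRoots p F, v (μ - 1) := by
          rw [Finset.prod_const, hcardprim]
      _ ≤ ∏ ν ∈ primitiveRoots p F, v (1 - ν) := by
          apply Finset.prod_le_prod'
          intro ν hν
          rw [v.map_sub_swap 1 ν]
          exact key μ hμ ν ((mem_primitiveRoots hp0).mp hν)
  -- v (η - a) ≠ 0
  have hηa : v (η - a) ≠ 0 := by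
    intro h0
    rw [h0, zero_pow hpm1] at h
    exact not_lt_zero' h
  -- key estimate for each nontrivial root μ
  have hkey : ∀ μ : F, μ ^ p = 1 → v (a * (μ - 1)) < v (η - a) := by
    intro μ hμ
    have hμp : v (μ - 1) ^ (p - 1) ≤ v ((p : ℕ) : F) := hle μ hμ
    rcases le_or_gt (v a) (v η) with hcase | hcase
    · by_contra hcon
      push_neg at hcon
      have h1 : v (η - a) ^ (p - 1) ≤ (v (a * (μ - 1))) ^ (p - 1) :=
        pow_le_pow_left' hcon (p - 1)
      have h2 : (v (a * (μ - 1))) ^ (p - 1) ≤ v ((p : ℕ) : F) * v η ^ (p - 1) := by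
        rw [v.map_mul, mul_pow, mul_comm]
        exact mul_le_mul' hμp (pow_le_pow_left' hcase (p - 1))
      exact absurd (h1.trans h2) h.not_ge
    · have hva : v (η - a) = v a := v.map_sub_eq_of_lt_right hcase
      have hμlt : v (μ - 1) < 1 := by
        by_contra hcon
        push_neg at hcon
        have h1 : (1 : Γ) ≤ v (μ - 1) ^ (p - 1) := (one_le_pow_iff hpm1).mpr hcon
        exact absurd (h1.trans_lt (hμp.trans_lt hres)) (lt_irrefl 1)
      have hva0 : v a ≠ 0 := by
        intro h0
        rw [h0] at hcase
        exact not_lt_zero' hcase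
      rw [hva, v.map_mul]
      calc v a * v (μ - 1) < v a * 1 := by
            exact mul_lt_mul_of_pos_left hμlt (zero_lt_iff.mpr hva0)
        _ = v a := mul_one _
  -- each nontrivial factor has value v (η - a)
  have hfac : ∀ μ : F, μ ^ p = 1 → v (η - μ * a) = v (η - a) := by
    intro μ hμ
    have heq : η - μ * a = (η - a) - a * (μ - 1) := by ring
    rw [heq, v.map_sub_eq_of_lt_left (hkey μ hμ)]
  -- assemble
  have h1mem : (1 : F) ∈ Polynomial.nthRootsFinset p (1 : F) :=
    Polynomial.one_mem_nthRootsFinset hp0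
  rw [hζ.pow_sub_pow_eq_prod_sub_mul (x := η) (y := a) hp0, map_prod]
  have : ∀ μ ∈ Polynomial.nthRootsFinset p (1 : F), v (η - μ * a) = v (η - a) := by
    intro μ hμ
    exact hfac μ ((Polynomial.mem_nthRootsFinset hp0 (1 : F)).mp hμ)
  rw [Finset.prod_congr rfl this, Finset.prod_const, hζ.card_nthRootsFinset]
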